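/- Corollary (quadratic bound via a divergence-free current). Suppose 𝒦_{ij} : ℝ → ℝ ((i,j) ∈ V × V) are continuous τ-periodic functions with 𝒦_{ij}(t) = −𝒦_{ji}(t) for all i,j,t, identically zero when (i,j) ∉ E, satisfying Σ_{j∈V} 𝒦_{ij}(t) = 0 for all i and t, and such that K := (1/τ)∫₀^τ (1/2)Σ_{(i,j)∈V×V} α_{ij}(t)𝒦_{ij}(t) dt ≠ 0. Define σ̃ := Σ_{(i,j)∈E} (1/τ)∫₀^τ 𝒦_{ij}(t)²/(𝒬_{ij}(t) + 𝒬_{ji}(t)) dt. Then limsup_{y→y_{α,γ}, y≠y_{α,γ}} I_{α,γ}(y)/(y − y_{α,γ})² ≤ σ̃/(4 K²), where the limsup is taken in [0,∞]. -/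

import Mathlib

open MeasureTheory Filter
open scoped Topology ENNReal

/-- The function `Φ(q,p) = q log(q/p) − q + p` on `[0,∞) × [0,∞)` with values in `[0,∞]`,
with the conventions `Φ(0,p) = p` and `Φ(q,0) = ∞` for `q > 0`. -/
noncomputable def Phi (q p : ℝ) : ℝ≥0∞ :=
  if q = 0 then ENNReal.ofReal p
  else if p = 0 then ⊤
  else ENNReal.ofReal (q * Real.log (q / p) - q + p)

section Aux

lemma aux_hasDeriv (x : ℝ) (hx : -1 < x) :
    HasDerivAt (fun x : ℝ => x - x^2/2 + x^3/3 - Real.log (1+x))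
      (x^3/(1+x)) x := by
  have h1 : (0:ℝ) < 1 + x := by linarith
  have hlog : HasDerivAt (fun x : ℝ => Real.log (1+x)) (1/(1+x)) x := by
    have : HasDerivAt (fun x : ℝ => 1 + x) 1 x := by
      simpa using (hasDerivAt_id x).const_add (1:ℝ)
    simpa using this.log h1.ne'
  have hp : HasDerivAt (fun x : ℝ => x - x^2/2 + x^3/3)
      (1 - 2*x/2 + 3*x^2/3) x := by
    have h1 : HasDerivAt (fun x : ℝ => x) 1 x := hasDerivAt_id x
    have h2 : HasDerivAt (fun x : ℝ => x^2/2) (2*x/2) x := by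
      simpa using ((hasDerivAt_pow 2 x).div_const 2)
    have h3 : HasDerivAt (fun x : ℝ => x^3/3) (3*x^2/3) x := by
      simpa using ((hasDerivAt_pow 3 x).div_const 3)
    exact (h1.sub h2).add h3
  have : HasDerivAt (fun x : ℝ => x - x^2/2 + x^3/3 - Real.log (1+x))
      (1 - 2*x/2 + 3*x^2/3 - 1/(1+x)) x := hp.sub hlog
  convert this using 1
  field_simp
  ring

lemma aux_log (x : ℝ) (hx : -1 < x) : Real.log (1+x) ≤ x - x^2/2 + x^3/3 := by
  set h : ℝ → ℝ := fun x => x - x^2/2 + x^3/3 - Real.log (1+x) with hh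
  have hd : ∀ y ∈ Set.Ioi (-1:ℝ), HasDerivAt h (y^3/(1+y)) y := fun y hy =>
    aux_hasDeriv y hy
  have hcont : ContinuousOn h (Set.Ioi (-1:ℝ)) := fun y hy =>
    ((hd y hy).continuousAt).continuousWithinAt
  have key : 0 ≤ h x := by
    rcases le_or_gt 0 x with hx0 | hx0
    · -- monotone on [0, ∞)
      have hmono : MonotoneOn h (Set.Ici (0:ℝ)) := by
        apply monotoneOn_of_deriv_nonneg (convex_Ici 0)
        · exact hcont.mono (fun y hy => lt_of_lt_of_le (by norm_num : (-1:ℝ) < 0) hy)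
        · intro y hy
          simp only [Set.nonempty_Iio, interior_Ici'] at hy
          exact (hd y (lt_trans (by norm_num : (-1:ℝ) < 0) hy)).differentiableAt.differentiableWithinAt
        · intro y hy
          simp only [Set.nonempty_Iio, interior_Ici', Set.mem_Ioi] at hy
          rw [(hd y (by exact lt_trans (by norm_num) hy)).deriv]
          have h1y : (0:ℝ) < 1 + y := by linarith
          have : (0:ℝ) ≤ y^3 := by positivity
          positivity
      have := hmono (Set.self_mem_Ici) hx0 hx0
      simpa [hh] using this
    · -- antitone on (-1, 0]
      have hmono : AntitoneOn h (Set.Ioc (-1:ℝ) 0) := by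
        apply antitoneOn_of_deriv_nonpos (convex_Ioc (-1) 0)
        · exact hcont.mono Set.Ioc_subset_Ioi_self
        · intro y hy
          rw [interior_Ioc] at hy
          exact (hd y hy.1).differentiableAt.differentiableWithinAt
        · intro y hy
          rw [interior_Ioc] at hy
          rw [(hd y hy.1).deriv]
          apply div_nonpos_of_nonpos_of_nonneg
          · have hy2 : y ≤ 0 := hy.2.le
            nlinarith [sq_nonneg y]
          · linarith [hy.1]
      have := hmono (Set.mem_Ioc.2 ⟨hx, hx0.le⟩) (Set.mem_Ioc.2 ⟨by norm_num, le_refl 0⟩) hx0.le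
      simpa [hh] using this
  have : Real.log (1+x) ≤ x - x^2/2 + x^3/3 := by
    simp only [hh] at key; linarith
  exact this

lemma aux_entropy (e : ℝ) (he : |e| ≤ 1/2) :
    (1+e) * Real.log (1+e) - e ≤ e^2/2 + |e|^3 := by
  have h1 : -1 < e := by cases' abs_le.mp he with h _; linarith
  have h1' : (0:ℝ) ≤ 1 + e := by linarith
  have := aux_log e h1
  have hmul : (1+e) * Real.log (1+e) ≤ (1+e) * (e - e^2/2 + e^3/3) :=
    mul_le_mul_of_nonneg_left this h1'
  have expand : (1+e) * (e - e^2/2 + e^3/3) - e = e^2/2 - e^3/6 + e^4/3 := by ring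
  have habs : -e^3/6 ≤ |e|^3/6 := by
    have : -e^3 ≤ |e|^3 := by
      calc -e^3 ≤ |e^3| := neg_le_abs _
      _ = |e|^3 := abs_pow e 3
    linarith
  have habs2 : e^4/3 ≤ |e|^3/6 := by
    have h4 : e^4 = |e|^3 * |e| := by
      have : |e|^3 * |e| = |e|^4 := by ring
      rw [this, ← abs_pow, abs_of_nonneg (by positivity : (0:ℝ) ≤ e^4)]
    have : |e|^3 * |e| ≤ |e|^3 * (1/2) := by
      apply mul_le_mul_of_nonneg_left he (by positivity)
    rw [h4]; linarith
  nlinarith [hmul]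

-- Phi bound
lemma aux_phi_bound (q e : ℝ) (hq : 0 < q) (he : |e| ≤ 1/2) :
    Phi (q * (1+e)) q ≤ ENNReal.ofReal (q * (e^2/2 + |e|^3)) := by
  have h1 : (0:ℝ) < 1 + e := by cases' abs_le.mp he with h _; linarith
  have hne : q * (1+e) ≠ 0 := by positivity
  rw [Phi, if_neg hne, if_neg hq.ne']
  apply ENNReal.ofReal_le_ofReal
  have hdiv : q * (1+e) / q = 1 + e := by field_simp
  rw [hdiv]
  have := aux_entropy e he
  nlinarith [this, hq.le]

lemma per_bound {τ : ℝ} (hτ : 0 < τ) {f : ℝ → ℝ} (hf : Continuous f)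
    (hp : Function.Periodic f τ) : ∃ M : ℝ, 0 ≤ M ∧ ∀ t, f t ≤ M := by
  obtain ⟨x0, hx0, hmax⟩ := (isCompact_Icc (a := (0:ℝ)) (b := τ)).exists_isMaxOn
    (Set.nonempty_Icc.2 hτ.le) (hf.continuousOn)
  refine ⟨max (f x0) 0, le_max_right _ _, fun t => ?_⟩
  obtain ⟨y, hy, hfy⟩ := hp.exists_mem_Ico₀ hτ t
  rw [hfy]
  exact le_max_of_le_left (hmax (Set.Ico_subset_Icc_self hy))

lemma sum_swap_of_symm {V M : Type} [AddCommMonoid M] (E : Finset (V × V))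
    (hsymm : ∀ i j : V, (i,j) ∈ E ↔ (j,i) ∈ E) (f : V → V → M) :
    ∑ e ∈ E, f e.1 e.2 = ∑ e ∈ E, f e.2 e.1 := by
  apply Finset.sum_nbij' (i := fun e : V × V => e.swap) (j := fun e : V × V => e.swap)
  · intro a ha; exact (hsymm a.1 a.2).1 (by simpa using ha)
  · intro a ha; exact (hsymm a.1 a.2).1 (by simpa using ha)
  · intro a _; simp
  · intro a _; simp
  · intro a _; rfl

end Aux

set_option maxHeartbeats 1000000 in
theorem stmt4
    {V : Type} [Fintype V] [Nonempty V]
    (E : Finset (V × V)) (hE : ∀ i : V, (i, i) ∉ E)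
    (hE_symm : ∀ i j : V, (i, j) ∈ E ↔ (j, i) ∈ E)
    (τ : ℝ) (hτ : 0 < τ)
    (w : V → V → ℝ → ℝ)
    (hw_cont : ∀ i j, Continuous (w i j))
    (hw_per : ∀ i j, Function.Periodic (w i j) τ)
    (hw_pos : ∀ i j, (i, j) ∈ E → ∀ t, 0 < w i j t)
    (hw_zero : ∀ i j, (i, j) ∉ E → ∀ t, w i j t = 0)
    (pi : V → ℝ → ℝ)
    (hpi_diff : ∀ i, ContDiff ℝ 1 (pi i))
    (hpi_per : ∀ i, Function.Periodic (pi i) τ)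
    (hpi_pos : ∀ i t, 0 < pi i t)
    (hpi_sum : ∀ t : ℝ, ∑ i, pi i t = 1)
    (hpi_cont_eq : ∀ i t, deriv (pi i) t
      + (∑ j, pi i t * w i j t) - (∑ j, pi j t * w j i t) = 0)
    (α : V → V → ℝ → ℝ)
    (hα_cont : ∀ i j, Continuous (α i j))
    (hα_per : ∀ i j, Function.Periodic (α i j) τ)
    (hα_anti : ∀ i j (t : ℝ), α i j t = - α j i t)
    (γ : V → ℝ → ℝ)
    (hγ_cont : ∀ i, Continuous (γ i))
    (hγ_per : ∀ i, Function.Periodic (γ i) τ)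
    (y0 : ℝ)
    (hy0 : y0 = (1 / τ) * (∫ t in (0:ℝ)..τ,
      ((∑ i, ∑ j, α i j t * (pi i t * w i j t)) + ∑ i, γ i t * pi i t)))
    (hy0_ne : y0 ≠ 0)
    (Iag : ℝ → ℝ≥0∞)
    (hI : ∀ y : ℝ, Iag y = sInf { c : ℝ≥0∞ |
      ∃ (Q : V → V → ℝ → ℝ) (ρ : V → ℝ → ℝ),
        (∀ i j, Continuous (Q i j)) ∧
        (∀ i j, Function.Periodic (Q i j) τ) ∧
        (∀ i j t, 0 ≤ Q i j t) ∧
        (∀ i j, (i, j) ∉ E → ∀ t, Q i j t = 0) ∧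
        (∀ i, ContDiff ℝ 1 (ρ i)) ∧
        (∀ i, Function.Periodic (ρ i) τ) ∧
        (∀ i t, 0 ≤ ρ i t) ∧
        (∀ t : ℝ, ∑ i, ρ i t = 1) ∧
        (∀ i t, deriv (ρ i) t + (∑ j, Q i j t) - (∑ j, Q j i t) = 0) ∧
        ((1 / τ) * (∫ t in (0:ℝ)..τ,
          ((∑ i, ∑ j, α i j t * Q i j t) + ∑ i, γ i t * ρ i t)) = y) ∧
        c = ∑ e ∈ E, ENNReal.ofReal (1 / τ) *
          (∫⁻ t in Set.Ioc (0:ℝ) τ, Phi (Q e.1 e.2 t) (ρ e.1 t * w e.1 e.2 t)) })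
    -- the divergence-free current 𝒦
    (K : V → V → ℝ → ℝ)
    (hK_cont : ∀ i j, Continuous (K i j))
    (hK_per : ∀ i j, Function.Periodic (K i j) τ)
    (hK_anti : ∀ i j (t : ℝ), K i j t = - K j i t)
    (hK_zero : ∀ i j, (i, j) ∉ E → ∀ t, K i j t = 0)
    (hK_div : ∀ i (t : ℝ), (∑ j, K i j t) = 0)
    (Kav : ℝ)
    (hKav : Kav = (1 / τ) * (∫ t in (0:ℝ)..τ, (1 / 2) * ∑ i, ∑ j, α i j t * K i j t))
    (hKav_ne : Kav ≠ 0)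
    (σtilde : ℝ)
    (hσtilde : σtilde = ∑ e ∈ E, (1 / τ) * (∫ t in (0:ℝ)..τ,
      (K e.1 e.2 t) ^ 2 / (pi e.1 t * w e.1 e.2 t + pi e.2 t * w e.2 e.1 t))) :
    Filter.limsup (fun y : ℝ => Iag y / ENNReal.ofReal ((y - y0) ^ 2)) (𝓝[≠] y0)
      ≤ ENNReal.ofReal (σtilde / (4 * Kav ^ 2)) := by
  classical
  -- basic positivity facts
  have hw_nonneg : ∀ i j t, 0 ≤ w i j t := by
    intro i j t; by_cases h : (i,j) ∈ E
    · exact (hw_pos i j h t).le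
    · rw [hw_zero i j h t]
  have hQpos : ∀ i j t, (i,j) ∈ E → 0 < pi i t * w i j t := fun i j t h =>
    mul_pos (hpi_pos i t) (hw_pos i j h t)
  have hQnonneg : ∀ i j t, 0 ≤ pi i t * w i j t := fun i j t =>
    mul_nonneg (hpi_pos i t).le (hw_nonneg i j t)
  -- the symmetric activity S
  obtain ⟨S, hS_def⟩ : ∃ S : V → V → ℝ → ℝ,
      S = fun i j t => pi i t * w i j t + pi j t * w j i t := ⟨_, rfl⟩
  have hS_symm : ∀ i j t, S j i t = S i j t := by
    intro i j t; simp only [hS_def]; ring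
  have hS_pos : ∀ i j, (i,j) ∈ E → ∀ t, 0 < S i j t := by
    intro i j h t
    have h1 := hQpos i j t h
    have h2 := hQnonneg j i t
    simp only [hS_def]; linarith
  have hS_cont : ∀ i j, Continuous (S i j) := by
    intro i j
    simp only [hS_def]
    exact ((hpi_diff i).continuous.mul (hw_cont i j)).add
      ((hpi_diff j).continuous.mul (hw_cont j i))
  have hS_per : ∀ i j, Function.Periodic (S i j) τ := by
    intro i j t
    simp only [hS_def, hpi_per i t, hpi_per j t, hw_per i j t, hw_per j i t]
  -- bound for |K|
  obtain ⟨Mk, hMk0, hMk⟩ : ∃ M : ℝ, 0 ≤ M ∧ ∀ i j t, |K i j t| ≤ M := by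
    obtain ⟨M, hM0, hM⟩ := per_bound hτ
      (f := fun t => ∑ p : V × V, |K p.1 p.2 t|)
      (continuous_finset_sum _ (fun p _ => (hK_cont p.1 p.2).abs))
      (fun t => Finset.sum_congr rfl (fun p _ => by rw [hK_per p.1 p.2 t]))
    refine ⟨M, hM0, fun i j t => le_trans ?_ (hM t)⟩
    exact Finset.single_le_sum (f := fun p : V × V => |K p.1 p.2 t|)
      (fun p _ => abs_nonneg _) (Finset.mem_univ (i,j))
  -- bound for the rates
  obtain ⟨Mq, hMq0, hMq⟩ : ∃ M : ℝ, 0 ≤ M ∧ ∀ i j t, pi i t * w i j t ≤ M := by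
    obtain ⟨M, hM0, hM⟩ := per_bound hτ
      (f := fun t => ∑ p : V × V, pi p.1 t * w p.1 p.2 t)
      (continuous_finset_sum _ (fun p _ => (hpi_diff p.1).continuous.mul (hw_cont p.1 p.2)))
      (fun t => Finset.sum_congr rfl (fun p _ => by rw [hpi_per p.1 t, hw_per p.1 p.2 t]))
    refine ⟨M, hM0, fun i j t => le_trans ?_ (hM t)⟩
    exact Finset.single_le_sum (f := fun p : V × V => pi p.1 t * w p.1 p.2 t)
      (fun p _ => hQnonneg p.1 p.2 t) (Finset.mem_univ (i,j))
  -- positive lower bound for S on E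
  obtain ⟨m, hm, hSm⟩ : ∃ m : ℝ, 0 < m ∧ ∀ i j, (i,j) ∈ E → ∀ t, m ≤ S i j t := by
    obtain ⟨M, hM0, hM⟩ := per_bound hτ
      (f := fun t => ∑ e ∈ E, (S e.1 e.2 t)⁻¹)
      (continuous_finset_sum _ (fun e he => (hS_cont e.1 e.2).inv₀
        (fun t => (hS_pos e.1 e.2 he t).ne')))
      (fun t => Finset.sum_congr rfl (fun e _ => by rw [hS_per e.1 e.2 t]))
    refine ⟨(M+1)⁻¹, by positivity, fun i j hij t => ?_⟩
    have h1 : (S i j t)⁻¹ ≤ M + 1 := by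
      have h2 : (S i j t)⁻¹ ≤ ∑ e ∈ E, (S e.1 e.2 t)⁻¹ :=
        Finset.single_le_sum (f := fun e : V × V => (S e.1 e.2 t)⁻¹)
          (fun e he => (inv_nonneg).2 (hS_pos e.1 e.2 he t).le) hij
      linarith [hM t]
    have hSp := hS_pos i j hij t
    have hM1 : (0:ℝ) < M + 1 := by linarith
    nlinarith [mul_le_mul_of_nonneg_right h1 hSp.le, inv_mul_cancel₀ hSp.ne',
      inv_mul_cancel₀ hM1.ne', mul_pos (inv_pos.2 hM1) hSp]
  -- smallness scale
  set u0 : ℝ := m / (2*(Mk+1)) with hu0_def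
  have hu0 : 0 < u0 := by positivity
  have hKS : ∀ i j, (i,j) ∈ E → ∀ t, |K i j t| / S i j t ≤ Mk / m :=
    fun i j h t => div_le_div₀ hMk0 (hMk i j t) hm (hSm i j h t)
  have heps : ∀ u : ℝ, |u| ≤ u0 → ∀ i j, (i,j) ∈ E → ∀ t,
      |u * (K i j t / S i j t)| ≤ 1/2 := by
    intro u hu i j h t
    have hSp := hS_pos i j h t
    have habs : |u * (K i j t / S i j t)| = |u| * (|K i j t| / S i j t) := by
      rw [abs_mul, abs_div, abs_of_pos hSp]
    rw [habs]
    have h1 : |u| * (|K i j t| / S i j t) ≤ u0 * (Mk / m) := by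
      apply mul_le_mul hu (hKS i j h t) (by positivity) hu0.le
    refine le_trans h1 ?_
    rw [hu0_def, div_mul_div_comm, div_le_div_iff₀ (by positivity) (by norm_num)]
    nlinarith
  -- the constant in the cubic error term
  set C : ℝ := (E.card : ℝ) * (Mq * (Mk/m)^3) with hC_def
  have hC0 : 0 ≤ C := mul_nonneg (Nat.cast_nonneg _) (mul_nonneg hMq0 (pow_nonneg (div_nonneg hMk0 hm.le) 3))
  -- MAIN UPPER BOUND
  have hupper : ∀ u : ℝ, |u| ≤ u0 →
      Iag (y0 + u * Kav) ≤ ENNReal.ofReal (u^2 * (σtilde/4) + |u|^3 * C) := by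
    intro u hu
    obtain ⟨Qu, hQu_def⟩ : ∃ Qu : V → V → ℝ → ℝ, Qu = fun i j t =>
        if (i,j) ∈ E then pi i t * w i j t * (1 + u * (K i j t / S i j t)) else 0 := ⟨_, rfl⟩
    have hQu_cont : ∀ i j, Continuous (Qu i j) := by
      intro i j
      by_cases h : (i,j) ∈ E
      · simp only [hQu_def, if_pos h]
        exact ((hpi_diff i).continuous.mul (hw_cont i j)).mul
          (continuous_const.add (continuous_const.mul
            ((hK_cont i j).div (hS_cont i j) (fun t => (hS_pos i j h t).ne'))))
      · simp only [hQu_def, if_neg h]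
        exact continuous_const
    have hQu_per : ∀ i j, Function.Periodic (Qu i j) τ := by
      intro i j t
      simp only [hQu_def, hpi_per i t, hw_per i j t, hK_per i j t, hS_per i j t]
    have hQu_nonneg : ∀ i j t, 0 ≤ Qu i j t := by
      intro i j t
      by_cases h : (i,j) ∈ E
      · simp only [hQu_def, if_pos h]
        have h2 := (abs_le.mp (heps u hu i j h t)).1
        have h3 := hQnonneg i j t
        nlinarith
      · simp only [hQu_def, if_neg h]
        exact le_refl 0
    have hQu_zero : ∀ i j, (i,j) ∉ E → ∀ t, Qu i j t = 0 := by
      intro i j h t; simp only [hQu_def, if_neg h]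
    -- divergence condition
    have hQu_div : ∀ i t, deriv (pi i) t + (∑ j, Qu i j t) - (∑ j, Qu j i t) = 0 := by
      intro i t
      have hterm : ∀ j, Qu i j t - Qu j i t
          = (pi i t * w i j t - pi j t * w j i t) + u * K i j t := by
        intro j
        by_cases h : (i,j) ∈ E
        · have h' : (j,i) ∈ E := (hE_symm i j).1 h
          have hsne : S i j t ≠ 0 := (hS_pos i j h t).ne'
          have hSS : S i j t = pi i t * w i j t + pi j t * w j i t := by
            simp only [hS_def]
          simp only [hQu_def, if_pos h, if_pos h']
          rw [hK_anti j i t, hS_symm i j t]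
          rw [hSS] at hsne ⊢
          field_simp
          ring
        · have h' : (j,i) ∉ E := fun hc => h ((hE_symm i j).2 hc)
          simp only [hQu_def, if_neg h, if_neg h', hw_zero i j h t, hw_zero j i h' t,
            hK_zero i j h t]
          ring
      have hsum : (∑ j, Qu i j t) - (∑ j, Qu j i t)
          = ((∑ j, pi i t * w i j t) - (∑ j, pi j t * w j i t)) + u * ∑ j, K i j t := by
        calc (∑ j, Qu i j t) - (∑ j, Qu j i t)
            = ∑ j, (Qu i j t - Qu j i t) := by rw [Finset.sum_sub_distrib]
          _ = ∑ j, ((pi i t * w i j t - pi j t * w j i t) + u * K i j t) :=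
              Finset.sum_congr rfl (fun j _ => hterm j)
          _ = ((∑ j, pi i t * w i j t) - (∑ j, pi j t * w j i t)) + u * ∑ j, K i j t := by
              rw [Finset.sum_add_distrib, Finset.sum_sub_distrib, Finset.mul_sum]
      rw [hK_div i t, mul_zero, add_zero] at hsum
      have h1 := hpi_cont_eq i t
      linarith
    -- the constraint value
    have hpoint : ∀ t, ((∑ i, ∑ j, α i j t * Qu i j t) + ∑ i, γ i t * pi i t)
        = ((∑ i, ∑ j, α i j t * (pi i t * w i j t)) + ∑ i, γ i t * pi i t)
          + u * ((1/2) * ∑ i, ∑ j, α i j t * K i j t) := by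
      intro t
      obtain ⟨T, hT_def⟩ : ∃ T : V → V → ℝ,
          T = fun i j => α i j t * K i j t * (pi i t * w i j t) / S i j t := ⟨_, rfl⟩
      have hstep1 : ∀ i j, α i j t * Qu i j t
          = α i j t * (pi i t * w i j t) + u * T i j := by
        intro i j
        by_cases h : (i,j) ∈ E
        · have hsne : S i j t ≠ 0 := (hS_pos i j h t).ne'
          simp only [hQu_def, if_pos h, hT_def]
          field_simp
        · simp only [hQu_def, if_neg h, hT_def, hw_zero i j h t, hK_zero i j h t]
          simp
      have hpair : ∀ i j, T i j + T j i = α i j t * K i j t := by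
        intro i j
        by_cases h : (i,j) ∈ E
        · have h' : (j,i) ∈ E := (hE_symm i j).1 h
          have hsne : S i j t ≠ 0 := (hS_pos i j h t).ne'
          have hSS : S i j t = pi i t * w i j t + pi j t * w j i t := by
            simp only [hS_def]
          simp only [hT_def]
          rw [hK_anti j i t, hα_anti j i t, hS_symm i j t]
          rw [hSS] at hsne ⊢
          field_simp
        · have h' : (j,i) ∉ E := fun hc => h ((hE_symm i j).2 hc)
          simp only [hT_def, hK_zero i j h t, hK_zero j i h' t]
          simp
      have hswap : (∑ i, ∑ j, T j i) = ∑ i, ∑ j, T i j := Finset.sum_comm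
      have hT_half : (∑ i, ∑ j, T i j) = (1/2) * ∑ i, ∑ j, α i j t * K i j t := by
        have h2 : (∑ i, ∑ j, (T i j + T j i)) = ∑ i, ∑ j, α i j t * K i j t :=
          Finset.sum_congr rfl (fun i _ => Finset.sum_congr rfl (fun j _ => hpair i j))
        have h3 : (∑ i, ∑ j, (T i j + T j i))
            = (∑ i, ∑ j, T i j) + (∑ i, ∑ j, T j i) := by
          simp [Finset.sum_add_distrib]
        rw [h3, hswap] at h2
        linarith
      have h4a : (∑ i, ∑ j, α i j t * Qu i j t)
          = ∑ i, ∑ j, (α i j t * (pi i t * w i j t) + u * T i j) :=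
        Finset.sum_congr rfl (fun i _ => Finset.sum_congr rfl (fun j _ => hstep1 i j))
      have h4 : (∑ i, ∑ j, α i j t * Qu i j t)
          = (∑ i, ∑ j, α i j t * (pi i t * w i j t)) + u * (∑ i, ∑ j, T i j) := by
        rw [h4a]
        simp only [Finset.sum_add_distrib, ← Finset.mul_sum]
      rw [h4, hT_half]
      ring
    have hbase_cont : Continuous (fun t =>
        (∑ i, ∑ j, α i j t * (pi i t * w i j t)) + ∑ i, γ i t * pi i t) :=
      (continuous_finset_sum _ (fun i _ => continuous_finset_sum _ (fun j _ =>
        (hα_cont i j).mul ((hpi_diff i).continuous.mul (hw_cont i j))))).add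
      (continuous_finset_sum _ (fun i _ => (hγ_cont i).mul (hpi_diff i).continuous))
    have hhalf_cont : Continuous (fun t => (1/2) * ∑ i, ∑ j, α i j t * K i j t) :=
      continuous_const.mul (continuous_finset_sum _ (fun i _ =>
        continuous_finset_sum _ (fun j _ => (hα_cont i j).mul (hK_cont i j))))
    have hconstraint : (1 / τ) * (∫ t in (0:ℝ)..τ,
        ((∑ i, ∑ j, α i j t * Qu i j t) + ∑ i, γ i t * pi i t)) = y0 + u * Kav := by
      have hrw : (∫ t in (0:ℝ)..τ,
            ((∑ i, ∑ j, α i j t * Qu i j t) + ∑ i, γ i t * pi i t))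
          = (∫ t in (0:ℝ)..τ,
            (((∑ i, ∑ j, α i j t * (pi i t * w i j t)) + ∑ i, γ i t * pi i t)
              + u * ((1/2) * ∑ i, ∑ j, α i j t * K i j t))) := by
        apply intervalIntegral.integral_congr
        intro t _
        exact hpoint t
      rw [hrw, intervalIntegral.integral_add (hbase_cont.intervalIntegrable 0 τ)
        ((hhalf_cont.intervalIntegrable 0 τ).const_mul u),
        intervalIntegral.integral_const_mul]
      rw [hy0, hKav]
      ring
    have hIle : Iag (y0 + u * Kav) ≤ ∑ e ∈ E, ENNReal.ofReal (1 / τ) *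
        (∫⁻ t in Set.Ioc (0:ℝ) τ, Phi (Qu e.1 e.2 t) (pi e.1 t * w e.1 e.2 t)) := by
      rw [hI]
      exact sInf_le ⟨Qu, pi, hQu_cont, hQu_per, hQu_nonneg, hQu_zero, hpi_diff, hpi_per,
        (fun i t => (hpi_pos i t).le), hpi_sum, hQu_div, hconstraint, rfl⟩
    refine le_trans hIle ?_
    -- the quadratic cost estimate
    set C0 : ℝ := Mq * (Mk/m)^3 with hC0_def
    have hC00 : 0 ≤ C0 := by positivity
    have hG_cont : ∀ i j, (i,j) ∈ E → Continuous (fun t =>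
        (K i j t)^2 * (pi i t * w i j t) / (2 * (S i j t)^2)) := by
      intro i j h
      apply Continuous.div
      · exact ((hK_cont i j).pow 2).mul ((hpi_diff i).continuous.mul (hw_cont i j))
      · exact continuous_const.mul ((hS_cont i j).pow 2)
      · intro t; have := hS_pos i j h t; positivity
    obtain ⟨g, hg_def⟩ : ∃ g : V → V → ℝ → ℝ, g = fun i j t =>
        u^2 * ((K i j t)^2 * (pi i t * w i j t) / (2 * (S i j t)^2)) + |u|^3 * C0 := ⟨_, rfl⟩
    have hg_cont : ∀ i j, (i,j) ∈ E → Continuous (g i j) := by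
      intro i j h
      simp only [hg_def]
      exact (continuous_const.mul (hG_cont i j h)).add continuous_const
    have hg_nonneg : ∀ i j t, 0 ≤ g i j t := by
      intro i j t
      simp only [hg_def]
      have h1 : 0 ≤ (K i j t)^2 * (pi i t * w i j t) :=
        mul_nonneg (sq_nonneg _) (hQnonneg i j t)
      have h2 : 0 ≤ (K i j t)^2 * (pi i t * w i j t) / (2 * (S i j t)^2) :=
        div_nonneg h1 (by positivity)
      have h3 : (0:ℝ) ≤ |u|^3 * C0 := mul_nonneg (by positivity) hC00
      nlinarith [sq_nonneg u]
    have hphi : ∀ i j, (i,j) ∈ E → ∀ t,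
        Phi (Qu i j t) (pi i t * w i j t) ≤ ENNReal.ofReal (g i j t) := by
      intro i j h t
      have hq := hQpos i j t h
      have hε := heps u hu i j h t
      have hsp := hS_pos i j h t
      have hQeq : Qu i j t = (pi i t * w i j t) * (1 + u * (K i j t / S i j t)) := by
        simp only [hQu_def, if_pos h]
      rw [hQeq]
      refine le_trans (aux_phi_bound _ _ hq hε) (ENNReal.ofReal_le_ofReal ?_)
      have key1 : (pi i t * w i j t) * ((u * (K i j t / S i j t))^2/2)
          = u^2 * ((K i j t)^2 * (pi i t * w i j t) / (2 * (S i j t)^2)) := by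
        field_simp
      have h3 : |u * (K i j t / S i j t)|^3 = |u|^3 * (|K i j t|/S i j t)^3 := by
        rw [abs_mul, abs_div, abs_of_pos hsp, mul_pow]
      have h4 : (|K i j t|/S i j t)^3 ≤ (Mk/m)^3 :=
        pow_le_pow_left₀ (by positivity) (hKS i j h t) 3
      have h5 : (pi i t * w i j t) * |u * (K i j t / S i j t)|^3 ≤ |u|^3 * C0 := by
        rw [h3, hC0_def]
        calc (pi i t * w i j t) * (|u|^3 * (|K i j t|/S i j t)^3)
            ≤ Mq * (|u|^3 * (Mk/m)^3) :=
              mul_le_mul (hMq i j t) (mul_le_mul_of_nonneg_left h4 (by positivity))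
                (by positivity) hMq0
          _ = |u|^3 * (Mq * (Mk/m)^3) := by ring
      simp only [hg_def]
      rw [mul_add, key1]
      exact add_le_add le_rfl h5
    have hedge : ∀ e ∈ E, ENNReal.ofReal (1 / τ) *
        (∫⁻ t in Set.Ioc (0:ℝ) τ, Phi (Qu e.1 e.2 t) (pi e.1 t * w e.1 e.2 t))
        ≤ ENNReal.ofReal ((1/τ) * ∫ t in (0:ℝ)..τ, g e.1 e.2 t) := by
      intro e he
      have he' : (e.1, e.2) ∈ E := by simpa using he
      have hint : IntegrableOn (g e.1 e.2) (Set.Ioc 0 τ) volume :=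
        (hg_cont e.1 e.2 he').integrableOn_Ioc
      have hlin : (∫⁻ t in Set.Ioc (0:ℝ) τ, Phi (Qu e.1 e.2 t) (pi e.1 t * w e.1 e.2 t))
          ≤ ∫⁻ t in Set.Ioc (0:ℝ) τ, ENNReal.ofReal (g e.1 e.2 t) :=
        lintegral_mono (fun t => hphi e.1 e.2 he' t)
      have heq : (∫⁻ t in Set.Ioc (0:ℝ) τ, ENNReal.ofReal (g e.1 e.2 t))
          = ENNReal.ofReal (∫ t in Set.Ioc (0:ℝ) τ, g e.1 e.2 t) :=
        (ofReal_integral_eq_lintegral_ofReal hint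
          (Filter.Eventually.of_forall (fun t => hg_nonneg e.1 e.2 t))).symm
      calc ENNReal.ofReal (1 / τ) *
          (∫⁻ t in Set.Ioc (0:ℝ) τ, Phi (Qu e.1 e.2 t) (pi e.1 t * w e.1 e.2 t))
          ≤ ENNReal.ofReal (1 / τ) *
            ENNReal.ofReal (∫ t in Set.Ioc (0:ℝ) τ, g e.1 e.2 t) :=
            mul_le_mul_right (le_trans hlin heq.le) _
        _ = ENNReal.ofReal ((1/τ) * ∫ t in (0:ℝ)..τ, g e.1 e.2 t) := by
            rw [intervalIntegral.integral_of_le hτ.le,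
              ENNReal.ofReal_mul (by positivity : (0:ℝ) ≤ 1/τ)]
    -- the real-valued estimate
    have hsplit : ∀ e ∈ E, (1/τ) * ∫ t in (0:ℝ)..τ, g e.1 e.2 t
        = u^2 * ((1/τ) * ∫ t in (0:ℝ)..τ,
            (K e.1 e.2 t)^2 * (pi e.1 t * w e.1 e.2 t) / (2 * (S e.1 e.2 t)^2))
          + |u|^3 * C0 := by
      intro e he
      have he' : (e.1, e.2) ∈ E := by simpa using he
      have h1 : (∫ t in (0:ℝ)..τ, g e.1 e.2 t)
          = (∫ t in (0:ℝ)..τ, u^2 *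
              ((K e.1 e.2 t)^2 * (pi e.1 t * w e.1 e.2 t) / (2 * (S e.1 e.2 t)^2)))
            + ∫ t in (0:ℝ)..τ, (|u|^3 * C0 : ℝ) := by
        simp only [hg_def]
        rw [intervalIntegral.integral_add
          (((hG_cont e.1 e.2 he').intervalIntegrable 0 τ).const_mul _)
          (continuous_const.intervalIntegrable 0 τ)]
      rw [h1, intervalIntegral.integral_const, intervalIntegral.integral_const_mul]
      simp only [smul_eq_mul, sub_zero]
      generalize (∫ t in (0:ℝ)..τ, (K e.1 e.2 t)^2 * (pi e.1 t * w e.1 e.2 t)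
        / (2 * (S e.1 e.2 t)^2)) = I
      rw [mul_add]
      congr 1
      · ring
      · field_simp
    have hpair_int : (∑ e ∈ E, ∫ t in (0:ℝ)..τ,
          (K e.1 e.2 t)^2 * (pi e.1 t * w e.1 e.2 t) / (2 * (S e.1 e.2 t)^2))
        = (1/4) * ∑ e ∈ E, ∫ t in (0:ℝ)..τ, (K e.1 e.2 t)^2 / (S e.1 e.2 t) := by
      have hswapE := sum_swap_of_symm E hE_symm (fun i j => ∫ t in (0:ℝ)..τ,
        (K i j t)^2 * (pi i t * w i j t) / (2 * (S i j t)^2))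
      have hsum2 : (∑ e ∈ E, ((∫ t in (0:ℝ)..τ,
            (K e.1 e.2 t)^2 * (pi e.1 t * w e.1 e.2 t) / (2 * (S e.1 e.2 t)^2))
          + (∫ t in (0:ℝ)..τ,
            (K e.2 e.1 t)^2 * (pi e.2 t * w e.2 e.1 t) / (2 * (S e.2 e.1 t)^2))))
          = ∑ e ∈ E, (1/2) * ∫ t in (0:ℝ)..τ, (K e.1 e.2 t)^2 / (S e.1 e.2 t) := by
        apply Finset.sum_congr rfl
        intro e he
        have he' : (e.1, e.2) ∈ E := by simpa using he
        have he'' : (e.2, e.1) ∈ E := (hE_symm e.1 e.2).1 he'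
        rw [← intervalIntegral.integral_add
          ((hG_cont e.1 e.2 he').intervalIntegrable 0 τ)
          ((hG_cont e.2 e.1 he'').intervalIntegrable 0 τ),
          ← intervalIntegral.integral_const_mul]
        apply intervalIntegral.integral_congr
        intro t _
        have hsne : S e.1 e.2 t ≠ 0 := (hS_pos e.1 e.2 he' t).ne'
        have hSS : S e.1 e.2 t = pi e.1 t * w e.1 e.2 t + pi e.2 t * w e.2 e.1 t := by
          simp only [hS_def]
        dsimp only
        rw [hK_anti e.2 e.1 t, hS_symm e.1 e.2 t]
        rw [hSS] at hsne ⊢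
        field_simp
      rw [Finset.sum_add_distrib, ← hswapE] at hsum2
      rw [← Finset.mul_sum] at hsum2
      linarith
    have hσ' : σtilde = ∑ e ∈ E, (1/τ) * ∫ t in (0:ℝ)..τ,
        (K e.1 e.2 t)^2 / (S e.1 e.2 t) := by
      rw [hσtilde]
      simp only [hS_def]
    have h6 : (∑ e ∈ E, (1/τ) * ∫ t in (0:ℝ)..τ,
        (K e.1 e.2 t)^2 * (pi e.1 t * w e.1 e.2 t) / (2 * (S e.1 e.2 t)^2))
        = σtilde / 4 := by
      rw [← Finset.mul_sum, hpair_int, hσ', ← Finset.mul_sum]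
      ring
    have hreal : (∑ e ∈ E, (1/τ) * ∫ t in (0:ℝ)..τ, g e.1 e.2 t)
        = u^2 * (σtilde/4) + |u|^3 * C := by
      calc (∑ e ∈ E, (1/τ) * ∫ t in (0:ℝ)..τ, g e.1 e.2 t)
          = ∑ e ∈ E, (u^2 * ((1/τ) * ∫ t in (0:ℝ)..τ,
              (K e.1 e.2 t)^2 * (pi e.1 t * w e.1 e.2 t) / (2 * (S e.1 e.2 t)^2))
            + |u|^3 * C0) := Finset.sum_congr rfl hsplit
        _ = u^2 * (∑ e ∈ E, (1/τ) * ∫ t in (0:ℝ)..τ,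
              (K e.1 e.2 t)^2 * (pi e.1 t * w e.1 e.2 t) / (2 * (S e.1 e.2 t)^2))
            + (E.card : ℝ) * (|u|^3 * C0) := by
            rw [Finset.sum_add_distrib, ← Finset.mul_sum, Finset.sum_const, nsmul_eq_mul]
        _ = u^2 * (σtilde/4) + |u|^3 * C := by
            rw [h6]
            simp only [hC_def, hC0_def]
            ring
    have hg_int_nonneg : ∀ e ∈ E, 0 ≤ (1/τ) * ∫ t in (0:ℝ)..τ, g e.1 e.2 t := by
      intro e he
      have h0 : 0 ≤ ∫ t in (0:ℝ)..τ, g e.1 e.2 t :=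
        intervalIntegral.integral_nonneg (f := g e.1 e.2) (μ := volume) hτ.le
          (fun t _ => hg_nonneg e.1 e.2 t)
      exact mul_nonneg (by positivity) h0
    calc (∑ e ∈ E, ENNReal.ofReal (1 / τ) *
          (∫⁻ t in Set.Ioc (0:ℝ) τ, Phi (Qu e.1 e.2 t) (pi e.1 t * w e.1 e.2 t)))
        ≤ ∑ e ∈ E, ENNReal.ofReal ((1/τ) * ∫ t in (0:ℝ)..τ, g e.1 e.2 t) :=
          Finset.sum_le_sum hedge
      _ = ENNReal.ofReal (∑ e ∈ E, (1/τ) * ∫ t in (0:ℝ)..τ, g e.1 e.2 t) :=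
          (ENNReal.ofReal_sum_of_nonneg hg_int_nonneg).symm
      _ = ENNReal.ofReal (u^2 * (σtilde/4) + |u|^3 * C) := by rw [hreal]
  -- FINAL LIMSUP ARGUMENT
  set tgt : ℝ := σtilde / (4 * Kav^2) with htgt_def
  set D : ℝ := C / Kav^2 with hD_def
  have hD0 : 0 ≤ D := div_nonneg hC0 (sq_nonneg _)
  have hyb : ∀ y : ℝ, y ≠ y0 → |y - y0| ≤ u0 * |Kav| →
      Iag y / ENNReal.ofReal ((y - y0)^2)
        ≤ ENNReal.ofReal tgt + ENNReal.ofReal (|(y - y0)/Kav| * D) := by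
    intro y hy hyd
    set u : ℝ := (y - y0)/Kav with hu_def
    have hu_ne : u ≠ 0 := div_ne_zero (sub_ne_zero.2 hy) hKav_ne
    have hKavpos : 0 < |Kav| := abs_pos.2 hKav_ne
    have hu_abs : |u| ≤ u0 := by
      rw [hu_def, abs_div, div_le_iff₀ hKavpos]
      exact hyd
    have hyy : y0 + u * Kav = y := by
      rw [hu_def]; field_simp; ring
    have h1 : Iag y ≤ ENNReal.ofReal (u^2 * (σtilde/4) + |u|^3 * C) := by
      rw [← hyy]; exact hupper u hu_abs
    have hsq : (y - y0)^2 = u^2 * Kav^2 := by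
      rw [hu_def]; field_simp
    have hpos : 0 < u^2 * Kav^2 := by positivity
    calc Iag y / ENNReal.ofReal ((y - y0)^2)
        ≤ ENNReal.ofReal (u^2 * (σtilde/4) + |u|^3 * C) / ENNReal.ofReal (u^2 * Kav^2) := by
          rw [hsq]; exact ENNReal.div_le_div h1 (le_refl _)
      _ = ENNReal.ofReal ((u^2 * (σtilde/4) + |u|^3 * C) / (u^2 * Kav^2)) :=
          (ENNReal.ofReal_div_of_pos hpos).symm
      _ = ENNReal.ofReal (tgt + |u| * D) := by
          congr 1
          have habs3 : |u|^3 = |u| * u^2 := by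
            rw [← sq_abs]; ring
          rw [htgt_def, hD_def, habs3]
          field_simp
      _ ≤ ENNReal.ofReal tgt + ENNReal.ofReal (|u| * D) := ENNReal.ofReal_add_le
  -- conclude
  apply ENNReal.le_of_forall_pos_le_add
  intro ε hε _
  have hεR : (0:ℝ) < (ε:ℝ) := hε
  set δ : ℝ := min (u0 * |Kav|) ((ε / (D+1)) * |Kav|) with hδ_def
  have hKavpos : 0 < |Kav| := abs_pos.2 hKav_ne
  have hδpos : 0 < δ := by
    apply lt_min (by positivity)
    exact mul_pos (div_pos hεR (by linarith)) hKavpos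
  have hev : ∀ᶠ y in 𝓝[≠] y0,
      Iag y / ENNReal.ofReal ((y - y0)^2) ≤ ENNReal.ofReal tgt + (ε : ℝ≥0∞) := by
    have h1 : ∀ᶠ y : ℝ in 𝓝 y0, |y - y0| ≤ δ := by
      have := Metric.closedBall_mem_nhds y0 hδpos
      filter_upwards [this] with y hy
      simpa [Metric.mem_closedBall, Real.dist_eq] using hy
    filter_upwards [eventually_nhdsWithin_of_eventually_nhds h1, self_mem_nhdsWithin]
      with y hy1 hy2
    have hyne : y ≠ y0 := hy2
    have hb := hyb y hyne (le_trans hy1 (min_le_left _ _))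
    refine le_trans hb (add_le_add le_rfl ?_)
    have h2 : |(y - y0)/Kav| * D ≤ (ε:ℝ) := by
      have h3 : |(y - y0)/Kav| ≤ ε / (D+1) := by
        rw [abs_div, div_le_iff₀ hKavpos]
        exact le_trans hy1 (min_le_right _ _)
      have h4 : |(y - y0)/Kav| * D ≤ (ε / (D+1)) * D := by
        apply mul_le_mul_of_nonneg_right h3 hD0
      refine le_trans h4 ?_
      rw [div_mul_eq_mul_div, div_le_iff₀ (by linarith)]
      nlinarith
    calc ENNReal.ofReal (|(y - y0)/Kav| * D) ≤ ENNReal.ofReal (ε:ℝ) :=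
          ENNReal.ofReal_le_ofReal h2
      _ = (ε : ℝ≥0∞) := ENNReal.ofReal_coe_nnreal
  exact limsup_le_of_le (by isBoundedDefault) hev
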